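/- arXiv:2311.16523 — 2 statements merged into one kernel-verified Lean document; each statement's English description precedes it below -/
import Mathlib

section
/- If Z^a and Z^b are n×n sectorial matrices with phases in [α, β] (β − α < π), then Z^a + Z^b is invertible and the parallel connection Z^c = (Z^{a,−1} + Z^{b,−1})⁻¹ = Z^a (Z^a + Z^b)⁻¹ Z^b is sectorial with phases in [α, β]. -/
open Matrix Complex

noncomputable section

/-- The numerical range of a complex square matrix. -/
def numRange {ι : Type*} [Fintype ι] (C : Matrix ι ι ℂ) : Set ℂ :=
  {z | ∃ x : ι → ℂ, star x ⬝ᵥ x = 1 ∧ star x ⬝ᵥ C.mulVec x = z}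

/-- A matrix is sectorial if its numerical range does not contain 0. -/
def Sectorial {ι : Type*} [Fintype ι] (C : Matrix ι ι ℂ) : Prop :=
  (0 : ℂ) ∉ numRange C

/-- `PhasesIn C α β` : `C` admits a sectorial decomposition `C = Tᴴ D T` with `T`
invertible and `D` diagonal unitary whose diagonal entries have arguments in `[α, β]`. -/
def PhasesIn {ι : Type*} [Fintype ι] [DecidableEq ι] (C : Matrix ι ι ℂ) (α β : ℝ) : Prop :=
  ∃ T D : Matrix ι ι ℂ, IsUnit T ∧ D.IsDiag ∧ C = Tᴴ * D * T ∧
    ∀ i, ∃ θ : ℝ, α ≤ θ ∧ θ ≤ β ∧ D i i = Complex.exp ((θ : ℂ) * Complex.I)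

/-- `C ∈ Z[α, β]` : sectorial with all phases in `[α, β]`. -/
def MemZ {ι : Type*} [Fintype ι] [DecidableEq ι] (C : Matrix ι ι ℂ) (α β : ℝ) : Prop :=
  Sectorial C ∧ PhasesIn C α β

/-- The closed sector `{r e^{jθ} : r ≥ 0, α ≤ θ ≤ β}` in the complex plane. -/
def sector (α β : ℝ) : Set ℂ :=
  {z | ∃ r θ : ℝ, 0 ≤ r ∧ α ≤ θ ∧ θ ≤ β ∧ z = (r : ℂ) * Complex.exp ((θ : ℂ) * Complex.I)}

section Aux

open scoped ComplexOrder

set_option maxHeartbeats 800000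

variable {ι : Type*} [Fintype ι] [DecidableEq ι]

private lemma quad_conj_mul (A M : Matrix ι ι ℂ) (x : ι → ℂ) :
    star x ⬝ᵥ (Aᴴ * M * A) *ᵥ x = star (A *ᵥ x) ⬝ᵥ M *ᵥ (A *ᵥ x) := by
  rw [star_mulVec, ← Matrix.dotProduct_mulVec, mulVec_mulVec, mulVec_mulVec]

private lemma quad_conjTranspose (M : Matrix ι ι ℂ) (x : ι → ℂ) :
    star x ⬝ᵥ Mᴴ *ᵥ x = starRingEnd ℂ (star x ⬝ᵥ M *ᵥ x) := by
  simp only [dotProduct, mulVec, conjTranspose_apply, Pi.star_apply, Complex.star_def,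
    map_sum, _root_.map_mul, Complex.conj_conj, Finset.mul_sum]
  rw [Finset.sum_comm]
  exact Finset.sum_congr rfl fun i _ => Finset.sum_congr rfl fun j _ => by ring

private lemma quad_diagonal (d : ι → ℂ) (x : ι → ℂ) :
    star x ⬝ᵥ (diagonal d) *ᵥ x = ∑ i, (Complex.normSq (x i) : ℂ) * d i := by
  simp only [dotProduct, mulVec_diagonal, Pi.star_apply, Complex.star_def]
  refine Finset.sum_congr rfl fun i _ => ?_
  rw [show (starRingEnd ℂ) (x i) * (d i * x i) = ((starRingEnd ℂ) (x i) * x i) * d i by ring,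
    ← Complex.normSq_eq_conj_mul_self]

private lemma quad_single (d : ι → ℂ) (j : ι) (a : ℂ) :
    star (Pi.single j a) ⬝ᵥ (diagonal d) *ᵥ (Pi.single j a) = star a * a * d j := by
  simp [dotProduct, mulVec_diagonal, Pi.single_apply, apply_ite, Finset.sum_ite_eq']
  ring

private lemma single_term (r t ψ : ℝ) :
    Complex.exp (-(ψ:ℂ)*I) * ((r:ℂ) * Complex.exp ((t:ℂ)*I))
      = (r:ℂ) * Complex.exp ((((t - ψ : ℝ)):ℂ)*I) := by
  rw [show Complex.exp (-(ψ:ℂ)*I) * ((r:ℂ) * Complex.exp ((t:ℂ)*I))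
      = (r:ℂ) * (Complex.exp ((t:ℂ)*I) * Complex.exp (-(ψ:ℂ)*I)) by ring, ← Complex.exp_add]
  push_cast
  ring_nf

private lemma single_term_im (r t ψ : ℝ) :
    (Complex.exp (-(ψ:ℂ)*I) * ((r:ℂ) * Complex.exp ((t:ℂ)*I))).im = r * Real.sin (t - ψ) := by
  rw [single_term, show ((r:ℂ) * Complex.exp ((((t - ψ : ℝ)):ℂ)*I)).im
      = r * (Complex.exp ((((t - ψ : ℝ)):ℂ)*I)).im from by simp [Complex.mul_im],
    Complex.exp_ofReal_mul_I_im]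

private lemma single_term_re (r t ψ : ℝ) :
    (Complex.exp (-(ψ:ℂ)*I) * ((r:ℂ) * Complex.exp ((t:ℂ)*I))).re = r * Real.cos (t - ψ) := by
  rw [single_term, show ((r:ℂ) * Complex.exp ((((t - ψ : ℝ)):ℂ)*I)).re
      = r * (Complex.exp ((((t - ψ : ℝ)):ℂ)*I)).re from by simp [Complex.mul_re],
    Complex.exp_ofReal_mul_I_re]

private lemma exp_mul_exp_neg (t : ℝ) :
    Complex.exp ((t:ℂ) * I) * Complex.exp (((-t : ℝ):ℂ) * I) = 1 := by
  rw [← Complex.exp_add, show ((t:ℂ) * I + ((-t : ℝ):ℂ) * I) = 0 by push_cast; ring,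
    Complex.exp_zero]

private lemma phases_quad {C : Matrix ι ι ℂ} {α β : ℝ} (h : PhasesIn C α β) (x : ι → ℂ) :
    ∃ (y : ι → ℝ) (θ : ι → ℝ), (∀ i, 0 ≤ y i) ∧ (x ≠ 0 → ∃ i, 0 < y i) ∧
      (∀ i, α ≤ θ i ∧ θ i ≤ β) ∧
      star x ⬝ᵥ C *ᵥ x = ∑ i, (y i : ℂ) * Complex.exp ((θ i : ℂ) * I) := by
  obtain ⟨T, D, hT, hD, rfl, hθ⟩ := h
  choose θ hθ1 hθ2 hθ3 using hθ
  refine ⟨fun i => Complex.normSq ((T *ᵥ x) i), θ, fun i => Complex.normSq_nonneg _, ?_,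
    fun i => ⟨hθ1 i, hθ2 i⟩, ?_⟩
  · intro hx
    have hTx : T *ᵥ x ≠ 0 := by
      intro h0
      apply hx
      have := congrArg (fun v => T⁻¹ *ᵥ v) h0
      simpa [mulVec_mulVec, Matrix.nonsing_inv_mul T ((Matrix.isUnit_iff_isUnit_det T).mp hT)]
        using this
    obtain ⟨i, hi⟩ := Function.ne_iff.mp hTx
    exact ⟨i, Complex.normSq_pos.mpr hi⟩
  · rw [quad_conj_mul, ← hD.diagonal_diag, quad_diagonal]
    exact Finset.sum_congr rfl fun i _ => by rw [Matrix.diag, hθ3 i]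

private lemma quad_bound_im_a {C : Matrix ι ι ℂ} {α β : ℝ} (h : PhasesIn C α β)
    (hs : β - α < Real.pi) (x : ι → ℂ) :
    0 ≤ (Complex.exp (-(α:ℂ)*I) * (star x ⬝ᵥ C *ᵥ x)).im := by
  obtain ⟨y, θ, hy, -, hθ, hq⟩ := phases_quad h x
  rw [hq, Finset.mul_sum, Complex.im_sum]
  refine Finset.sum_nonneg fun i _ => ?_
  rw [single_term_im]
  exact mul_nonneg (hy i) (Real.sin_nonneg_of_nonneg_of_le_pi
    (by linarith [(hθ i).1]) (by linarith [(hθ i).2, (hθ i).1]))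

private lemma quad_bound_im_b {C : Matrix ι ι ℂ} {α β : ℝ} (h : PhasesIn C α β)
    (hs : β - α < Real.pi) (x : ι → ℂ) :
    (Complex.exp (-(β:ℂ)*I) * (star x ⬝ᵥ C *ᵥ x)).im ≤ 0 := by
  obtain ⟨y, θ, hy, -, hθ, hq⟩ := phases_quad h x
  rw [hq, Finset.mul_sum, Complex.im_sum]
  refine Finset.sum_nonpos fun i _ => ?_
  rw [single_term_im]
  refine mul_nonpos_of_nonneg_of_nonpos (hy i) ?_
  rw [show θ i - β = -(β - θ i) by ring, Real.sin_neg]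
  have := Real.sin_nonneg_of_nonneg_of_le_pi (x := β - θ i) (by linarith [(hθ i).2])
    (by linarith [(hθ i).1, (hθ i).2])
  linarith

private lemma quad_bound_re {C : Matrix ι ι ℂ} {α β : ℝ} (h : PhasesIn C α β)
    (hs : β - α < Real.pi) (x : ι → ℂ) (hx : x ≠ 0) :
    0 < (Complex.exp (-(((α+β)/2 : ℝ):ℂ)*I) * (star x ⬝ᵥ C *ᵥ x)).re := by
  obtain ⟨y, θ, hy, hypos, hθ, hq⟩ := phases_quad h x
  rw [hq, Finset.mul_sum, Complex.re_sum]
  have hcos : ∀ i, 0 < Real.cos (θ i - (α+β)/2) := fun i =>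
    Real.cos_pos_of_mem_Ioo ⟨by linarith [(hθ i).1, (hθ i).2, Real.pi_pos],
      by linarith [(hθ i).1, (hθ i).2, Real.pi_pos]⟩
  obtain ⟨i0, hi0⟩ := hypos hx
  refine Finset.sum_pos' (fun i _ => ?_) ⟨i0, Finset.mem_univ _, ?_⟩
  · rw [single_term_re]; exact mul_nonneg (hy i) (hcos i).le
  · rw [single_term_re]; exact mul_pos hi0 (hcos i0)

private lemma isUnit_of_quad {C : Matrix ι ι ℂ}
    (h : ∀ x : ι → ℂ, x ≠ 0 → star x ⬝ᵥ C *ᵥ x ≠ 0) : IsUnit C := by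
  rw [Matrix.isUnit_iff_isUnit_det, isUnit_iff_ne_zero]
  intro hdet
  obtain ⟨v, hv, hv0⟩ := (Matrix.exists_mulVec_eq_zero_iff).mpr hdet
  exact h v hv (by rw [hv0, dotProduct_zero])

private lemma phases_inv {C : Matrix ι ι ℂ} {α β : ℝ} (h : PhasesIn C α β) :
    IsUnit C ∧ PhasesIn C⁻¹ (-β) (-α) := by
  obtain ⟨T, D, hT, hDdiag, rfl, hθ⟩ := h
  choose θ hθ1 hθ2 hθ3 using hθ
  have hDeq : D = diagonal fun i => Complex.exp ((θ i : ℂ) * I) := by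
    have : D.diag = fun i => Complex.exp ((θ i : ℂ) * I) := funext fun i => hθ3 i
    rw [← hDdiag.diagonal_diag, this]
  subst hDeq
  have hTd : IsUnit T.det := (Matrix.isUnit_iff_isUnit_det T).mp hT
  have hTH : IsUnit (Tᴴ) := by
    rw [Matrix.isUnit_iff_isUnit_det, Matrix.det_conjTranspose]
    exact hTd.star
  have hDunit : IsUnit (diagonal fun i => Complex.exp ((θ i : ℂ) * I)) := by
    rw [Matrix.isUnit_iff_isUnit_det, Matrix.det_diagonal, isUnit_iff_ne_zero]
    exact Finset.prod_ne_zero_iff.mpr fun i _ => Complex.exp_ne_zero _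
  have e1 : ((Tᴴ)⁻¹)ᴴ = T⁻¹ := by
    rw [Matrix.conjTranspose_nonsing_inv, Matrix.conjTranspose_conjTranspose]
  have e2 : (diagonal fun i => Complex.exp ((θ i : ℂ) * I))⁻¹
      = diagonal fun i => Complex.exp (((-θ i : ℝ):ℂ) * I) :=
    Matrix.inv_eq_right_inv (by
      rw [diagonal_mul_diagonal, ← diagonal_one]
      exact congrArg diagonal (funext fun i => exp_mul_exp_neg (θ i)))
  refine ⟨(hTH.mul hDunit).mul hT, (Tᴴ)⁻¹, diagonal fun i => Complex.exp (((-θ i : ℝ):ℂ) * I),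
    (Matrix.isUnit_nonsing_inv_iff).mpr hTH, Matrix.isDiag_diagonal _, ?_, fun i =>
      ⟨-θ i, by linarith [hθ2 i], by linarith [hθ1 i], by rw [diagonal_apply_eq]⟩⟩
  rw [Matrix.mul_inv_rev, Matrix.mul_inv_rev, ← Matrix.mul_assoc, e1, e2]
private lemma phases_of_quad {C : Matrix ι ι ℂ} {α β : ℝ} (hab : α ≤ β) (hs : β - α < Real.pi)
    (h1 : ∀ x, 0 ≤ (Complex.exp (-(α:ℂ)*I) * (star x ⬝ᵥ C *ᵥ x)).im)
    (h2 : ∀ x, (Complex.exp (-(β:ℂ)*I) * (star x ⬝ᵥ C *ᵥ x)).im ≤ 0)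
    (h3 : ∀ x, x ≠ 0 → 0 < (Complex.exp (-(((α+β)/2 : ℝ):ℂ)*I) * (star x ⬝ᵥ C *ᵥ x)).re) :
    PhasesIn C α β := by
  rcases isEmpty_or_nonempty ι with hE | hNE
  · exact ⟨1, 1, isUnit_one, Matrix.isDiag_one, by ext i j; exact isEmptyElim i,
      fun i => isEmptyElim i⟩
  set φ : ℝ := (α+β)/2 with hφ
  set c : ℂ := Complex.exp (-(φ:ℂ)*I) with hc
  set C' : Matrix ι ι ℂ := c • C with hC'
  set A : Matrix ι ι ℂ := (1/2 : ℂ) • (C' + C'ᴴ) with hA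
  set B : Matrix ι ι ℂ := (I/2 : ℂ) • (C'ᴴ - C') with hB
  have hAH : A.IsHermitian := by
    rw [Matrix.IsHermitian, hA, conjTranspose_smul, conjTranspose_add,
      conjTranspose_conjTranspose, show star ((1:ℂ)/2) = (1:ℂ)/2 by norm_num, add_comm]
  have eIB : (I:ℂ) • B = (-(1/2) : ℂ) • (C'ᴴ - C') := by
    rw [hB, smul_smul, show (I:ℂ) * (I/2) = -(1/2) by
      rw [show (I:ℂ) * (I/2) = I*I/2 by ring, Complex.I_mul_I]; norm_num]
  have hABC : A + I • B = C' := by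
    rw [hA, eIB]
    module
  have hApd : A.PosDef := by
    refine Matrix.PosDef.of_dotProduct_mulVec_pos hAH fun x hx => ?_
    have hq2 : star x ⬝ᵥ C' *ᵥ x = c * (star x ⬝ᵥ C *ᵥ x) := by
      rw [hC', smul_mulVec, dotProduct_smul]
      rfl
    have hq : star x ⬝ᵥ A *ᵥ x = (((c * (star x ⬝ᵥ C *ᵥ x)).re : ℝ) : ℂ) := by
      rw [hA, smul_mulVec, dotProduct_smul, add_mulVec, dotProduct_add,
        quad_conjTranspose, smul_eq_mul, hq2, Complex.add_conj]
      push_cast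
      ring
    rw [hq]
    exact_mod_cast Complex.zero_lt_real.mpr (h3 x hx)
  -- square root
  open scoped MatrixOrder in
  set R : Matrix ι ι ℂ := CFC.sqrt A with hRdef
  open scoped MatrixOrder in
  have hRH : R.IsHermitian := (Matrix.nonneg_iff_posSemidef.mp (CFC.sqrt_nonneg A)).1
  open scoped MatrixOrder in
  have hRR : R * R = A :=
    CFC.sqrt_mul_sqrt_self A (Matrix.nonneg_iff_posSemidef.mpr hApd.posSemidef)
  have hRdet : IsUnit R.det := by
    have hAu : IsUnit A.det := (Matrix.isUnit_iff_isUnit_det A).mp hApd.isUnit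
    rw [← hRR, Matrix.det_mul] at hAu
    exact isUnit_of_mul_isUnit_left hAu
  have hRu : IsUnit R := (Matrix.isUnit_iff_isUnit_det R).mpr hRdet
  have hRRinv : R * R⁻¹ = 1 := Matrix.mul_nonsing_inv _ hRdet
  have hRinvR : R⁻¹ * R = 1 := Matrix.nonsing_inv_mul _ hRdet
  clear_value R
  set S : Matrix ι ι ℂ := R⁻¹ * B * R⁻¹ with hSdef
  have hBH : B.IsHermitian := by
    rw [Matrix.IsHermitian, hB, conjTranspose_smul, conjTranspose_sub,
      conjTranspose_conjTranspose]
    rw [show star ((I:ℂ)/2) = -(I/2) by simp; ring]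
    match_scalars <;> ring
  have hSH : S.IsHermitian := by
    rw [Matrix.IsHermitian, hSdef, conjTranspose_mul, conjTranspose_mul,
      Matrix.conjTranspose_nonsing_inv, hRH.eq, hBH.eq, Matrix.mul_assoc]
  set V : Matrix ι ι ℂ := (hSH.eigenvectorUnitary : Matrix ι ι ℂ) with hVdef
  set lam : ι → ℝ := hSH.eigenvalues with hlam
  have hspec : S = V * diagonal (fun j => (lam j : ℂ)) * Vᴴ := by
    have := hSH.spectral_theorem
    rw [← Matrix.star_eq_conjTranspose]
    exact this
  have hVV : V * Vᴴ = 1 := by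
    rw [← Matrix.star_eq_conjTranspose]
    exact (Matrix.mem_unitaryGroup_iff).mp hSH.eigenvectorUnitary.2
  have hVHV : Vᴴ * V = 1 := by
    rw [← Matrix.star_eq_conjTranspose]
    exact (Matrix.mem_unitaryGroup_iff').mp hSH.eigenvectorUnitary.2
  clear_value V lam
  clear_value S
  set s : ι → ℝ := fun j => Real.sqrt (Real.sqrt (1 + lam j ^ 2)) with hsdef
  have hs_pos : ∀ j, 0 < s j := fun j =>
    Real.sqrt_pos.mpr (Real.sqrt_pos.mpr (by positivity))
  have hssq : ∀ j, s j ^ 2 = Real.sqrt (1 + lam j ^ 2) := fun j =>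
    Real.sq_sqrt (Real.sqrt_nonneg _)
  set θ : ι → ℝ := fun j => φ + Real.arctan (lam j) with hθdef
  set T : Matrix ι ι ℂ := diagonal (fun j => (s j : ℂ)) * Vᴴ * R with hTdef
  set D : Matrix ι ι ℂ := diagonal (fun j => Complex.exp ((θ j : ℂ) * I)) with hDdef
  have hentry : ∀ j, (s j : ℂ) * Complex.exp ((θ j : ℂ) * I) * (s j : ℂ)
      = Complex.exp ((φ:ℂ)*I) * (1 + (lam j : ℂ) * I) := by
    intro j
    have h1' : ((s j : ℂ)) * (s j : ℂ) = ((Real.sqrt (1 + lam j ^ 2) : ℝ) : ℂ) := by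
      rw [← Complex.ofReal_mul, ← sq, hssq]
    have hrt : (0:ℝ) < Real.sqrt (1 + lam j ^ 2) := Real.sqrt_pos.mpr (by positivity)
    rw [show (s j : ℂ) * Complex.exp ((θ j : ℂ) * I) * (s j : ℂ)
        = ((s j : ℂ) * (s j : ℂ)) * Complex.exp ((θ j : ℂ) * I) by ring, h1']
    rw [hθdef]
    push_cast
    rw [add_mul, Complex.exp_add, ← Complex.ofReal_arctan]
    have hne : ((Real.sqrt (1 + lam j ^ 2) : ℝ) : ℂ) ≠ 0 := by
      exact_mod_cast Complex.ofReal_ne_zero.mpr (ne_of_gt hrt)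
    have key : ((Real.sqrt (1 + lam j ^ 2) : ℝ) : ℂ)
        * Complex.exp ((Real.arctan (lam j) : ℂ) * I) = 1 + (lam j : ℂ) * I := by
      rw [Complex.exp_mul_I, ← Complex.ofReal_cos, ← Complex.ofReal_sin,
        Real.cos_arctan, Real.sin_arctan]
      push_cast
      field_simp
    rw [show ((Real.sqrt (1 + lam j ^ 2) : ℝ) : ℂ)
        * (Complex.exp ((φ:ℂ) * I) * Complex.exp ((Real.arctan (lam j) : ℂ) * I))
        = Complex.exp ((φ:ℂ) * I) * (((Real.sqrt (1 + lam j ^ 2) : ℝ) : ℂ)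
          * Complex.exp ((Real.arctan (lam j) : ℂ) * I)) by ring, key]
  have hTHeq : Tᴴ = R * V * diagonal (fun j => (s j : ℂ)) := by
    rw [hTdef, conjTranspose_mul, conjTranspose_mul, hRH.eq, conjTranspose_conjTranspose,
      diagonal_conjTranspose,
      show star (fun j => (s j : ℂ)) = fun j => (s j : ℂ) from funext fun j => by
        simp [Complex.star_def, Complex.conj_ofReal], Matrix.mul_assoc]
  have hmid : diagonal (fun j => (s j : ℂ)) * D * diagonal (fun j => (s j : ℂ))
      = Complex.exp ((φ:ℂ)*I) • ((1 : Matrix ι ι ℂ) + I • diagonal (fun j => (lam j : ℂ))) := by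
    rw [hDdef, diagonal_mul_diagonal, diagonal_mul_diagonal, ← diagonal_smul, ← diagonal_one,
      diagonal_add, ← diagonal_smul]
    refine congrArg diagonal (funext fun j => ?_)
    simp only [Pi.smul_apply, Pi.add_apply, Pi.one_apply, smul_eq_mul]
    rw [hentry j]
    ring
  have hSmat : V * diagonal (fun j => (lam j : ℂ)) * Vᴴ = S := hspec.symm
  have hdec : C = Tᴴ * D * T := by
    refine Eq.symm ?_
    calc Tᴴ * D * T
        = R * V * (diagonal (fun j => (s j : ℂ)) * D * diagonal (fun j => (s j : ℂ)))
          * (Vᴴ * R) := by rw [hTHeq, hTdef]; simp only [Matrix.mul_assoc]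
      _ = Complex.exp ((φ:ℂ)*I)
          • (R * V * ((1 : Matrix ι ι ℂ) + I • diagonal (fun j => (lam j : ℂ))) * (Vᴴ * R)) := by
          rw [hmid, Matrix.mul_smul, Matrix.smul_mul]
      _ = Complex.exp ((φ:ℂ)*I) • (A + I • B) := by
          congr 1
          rw [Matrix.mul_add, Matrix.add_mul, Matrix.mul_one]
          congr 1
          · rw [show R * V * (Vᴴ * R) = R * (V * Vᴴ) * R by simp only [Matrix.mul_assoc],
              hVV, Matrix.mul_one, hRR]
          · rw [Matrix.mul_smul, Matrix.smul_mul]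
            congr 1
            rw [show R * V * diagonal (fun j => (lam j : ℂ)) * (Vᴴ * R)
                = R * (V * diagonal (fun j => (lam j : ℂ)) * Vᴴ) * R by
                  simp only [Matrix.mul_assoc], hSmat, hSdef,
              show R * (R⁻¹ * B * R⁻¹) * R = (R * R⁻¹) * B * (R⁻¹ * R) by
                simp only [Matrix.mul_assoc], hRRinv, hRinvR, Matrix.one_mul, Matrix.mul_one]
      _ = Complex.exp ((φ:ℂ)*I) • (c • C) := by rw [hABC, hC']
      _ = C := by
          rw [smul_smul, hc, ← Complex.exp_add,
            show ((φ:ℂ)*I + -(φ:ℂ)*I) = 0 by ring, Complex.exp_zero, one_smul]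
  have hTu : IsUnit T := by
    have hdS : IsUnit (diagonal fun j => (s j : ℂ)) := by
      rw [Matrix.isUnit_iff_isUnit_det, Matrix.det_diagonal, isUnit_iff_ne_zero]
      exact Finset.prod_ne_zero_iff.mpr fun j _ =>
        Complex.ofReal_ne_zero.mpr (ne_of_gt (hs_pos j))
    have hVHu : IsUnit (Vᴴ) := by
      rw [Matrix.isUnit_iff_isUnit_det]
      refine IsUnit.of_mul_eq_one V.det ?_
      rw [← Matrix.det_mul, hVHV, Matrix.det_one]
    rw [hTdef]
    exact (hdS.mul hVHu).mul hRu
  have hbound : ∀ j, α ≤ θ j ∧ θ j ≤ β := by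
    intro j
    set xj : ι → ℂ := R⁻¹ *ᵥ (V *ᵥ Pi.single j 1) with hxj
    have hTx : T *ᵥ xj = Pi.single j ((s j : ℂ)) := by
      rw [hTdef, hxj, mulVec_mulVec, mulVec_mulVec,
        show diagonal (fun j => (s j : ℂ)) * Vᴴ * R * R⁻¹ * V
          = diagonal (fun j => (s j : ℂ)) * (Vᴴ * ((R * R⁻¹) * V)) by simp only [Matrix.mul_assoc],
        hRRinv, Matrix.one_mul, hVHV, Matrix.mul_one, diagonal_mulVec_single, mul_one]
    have hq : star xj ⬝ᵥ C *ᵥ xj = ((s j ^ 2 : ℝ) : ℂ) * Complex.exp ((θ j : ℂ) * I) := by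
      rw [hdec, quad_conj_mul, hTx, hDdef, quad_single, Complex.star_def, Complex.conj_ofReal]
      push_cast
      ring
    have hs2 : (0:ℝ) < s j ^ 2 := pow_pos (hs_pos j) 2
    have harc1 := Real.neg_pi_div_two_lt_arctan (lam j)
    have harc2 := Real.arctan_lt_pi_div_two (lam j)
    have hθj : θ j = φ + Real.arctan (lam j) := rfl
    have hpi := Real.pi_pos
    constructor
    · by_contra hcon
      push_neg at hcon
      have i1 := h1 xj
      rw [hq, single_term_im] at i1
      have hsin : Real.sin (θ j - α) < 0 :=
        Real.sin_neg_of_neg_of_neg_pi_lt (by linarith) (by linarith)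
      nlinarith
    · by_contra hcon
      push_neg at hcon
      have i2 := h2 xj
      rw [hq, single_term_im] at i2
      have hsin : 0 < Real.sin (θ j - β) :=
        Real.sin_pos_of_pos_of_lt_pi (by linarith) (by linarith)
      nlinarith
  exact ⟨T, D, hTu, Matrix.isDiag_diagonal _, hdec, fun i =>
    ⟨θ i, (hbound i).1, (hbound i).2, by rw [hDdef, diagonal_apply_eq]⟩⟩

private lemma sectorial_of_phases {C : Matrix ι ι ℂ} {α β : ℝ} (h : PhasesIn C α β)
    (hs : β - α < Real.pi) : Sectorial C := by
  rintro ⟨x, hx1, hx2⟩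
  have hx : x ≠ 0 := by
    intro h0
    rw [h0] at hx1
    simp at hx1
  have := quad_bound_re h hs x hx
  rw [hx2, mul_zero] at this
  simp at this

end Aux

theorem parallel_connection_preserves_phases {n : ℕ}
    (Za Zb : Matrix (Fin n) (Fin n) ℂ) (α β : ℝ)
    (hαβ : β - α < Real.pi) (ha : MemZ Za α β) (hb : MemZ Zb α β) :
    IsUnit (Za + Zb) ∧ (Za⁻¹ + Zb⁻¹)⁻¹ = Za * (Za + Zb)⁻¹ * Zb ∧
      MemZ (Za * (Za + Zb)⁻¹ * Zb) α β := by
  rcases Nat.eq_zero_or_pos n with rfl | hn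
  · have h0 : ∀ M : Matrix (Fin 0) (Fin 0) ℂ, M = 1 := fun M => by
      ext i j
      exact i.elim0
    refine ⟨h0 (Za + Zb) ▸ isUnit_one, by rw [h0 ((Za⁻¹ + Zb⁻¹)⁻¹), h0 (Za * (Za + Zb)⁻¹ * Zb)],
      ?_, 1, 1, isUnit_one, Matrix.isDiag_one, (h0 _).trans (by simp), fun i => i.elim0⟩
    rintro ⟨x, hx1, -⟩
    simp [dotProduct] at hx1
  obtain ⟨-, haPh⟩ := ha
  obtain ⟨-, hbPh⟩ := hb
  have hab : α ≤ β := by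
    obtain ⟨T, D, -, -, -, hθ⟩ := haPh
    obtain ⟨θ0, h1, h2, -⟩ := hθ ⟨0, hn⟩
    linarith
  obtain ⟨haU, haInvPh⟩ := phases_inv haPh
  obtain ⟨hbU, hbInvPh⟩ := phases_inv hbPh
  have haD : IsUnit Za.det := (Matrix.isUnit_iff_isUnit_det Za).mp haU
  have hbD : IsUnit Zb.det := (Matrix.isUnit_iff_isUnit_det Zb).mp hbU
  have hsplit : ∀ x : Fin n → ℂ,
      star x ⬝ᵥ (Za + Zb) *ᵥ x = star x ⬝ᵥ Za *ᵥ x + star x ⬝ᵥ Zb *ᵥ x := fun x => by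
    rw [Matrix.add_mulVec, dotProduct_add]
  -- invertibility of the sum
  have hU : IsUnit (Za + Zb) := by
    refine isUnit_of_quad fun x hx h0 => ?_
    have h1 := quad_bound_re haPh hαβ x hx
    have h2 := quad_bound_re hbPh hαβ x hx
    have h3 : 0 < (Complex.exp (-(((α+β)/2 : ℝ):ℂ)*I) * (star x ⬝ᵥ (Za + Zb) *ᵥ x)).re := by
      rw [hsplit, mul_add, Complex.add_re]
      linarith
    rw [h0, mul_zero] at h3
    simp at h3
  have hUD : IsUnit (Za + Zb).det := (Matrix.isUnit_iff_isUnit_det _).mp hU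
  -- the parallel-sum identity
  have hWeq : Za⁻¹ + Zb⁻¹ = Zb⁻¹ * (Za + Zb) * Za⁻¹ := by
    rw [Matrix.mul_add, Matrix.add_mul, Matrix.mul_assoc, Matrix.mul_nonsing_inv Za haD,
      Matrix.mul_one, Matrix.nonsing_inv_mul Zb hbD, Matrix.one_mul, add_comm]
  have hfinal : (Za⁻¹ + Zb⁻¹)⁻¹ = Za * (Za + Zb)⁻¹ * Zb := by
    rw [hWeq, Matrix.mul_inv_rev, Matrix.mul_inv_rev,
      Matrix.nonsing_inv_nonsing_inv Za haD, Matrix.nonsing_inv_nonsing_inv Zb hbD,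
      Matrix.mul_assoc]
  -- phases of W = Za⁻¹ + Zb⁻¹
  have hsplitW : ∀ x : Fin n → ℂ,
      star x ⬝ᵥ (Za⁻¹ + Zb⁻¹) *ᵥ x = star x ⬝ᵥ Za⁻¹ *ᵥ x + star x ⬝ᵥ Zb⁻¹ *ᵥ x := fun x => by
    rw [Matrix.add_mulVec, dotProduct_add]
  have hs' : (-α) - (-β) < Real.pi := by linarith
  have hWPh : PhasesIn (Za⁻¹ + Zb⁻¹) (-β) (-α) := by
    refine phases_of_quad (by linarith) hs' (fun x => ?_) (fun x => ?_) (fun x hx => ?_)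
    · rw [hsplitW, mul_add, Complex.add_im]
      have h1 := quad_bound_im_a haInvPh hs' x
      have h2 := quad_bound_im_a hbInvPh hs' x
      linarith
    · rw [hsplitW, mul_add, Complex.add_im]
      have h1 := quad_bound_im_b haInvPh hs' x
      have h2 := quad_bound_im_b hbInvPh hs' x
      linarith
    · rw [hsplitW, mul_add, Complex.add_re]
      have h1 := quad_bound_re haInvPh hs' x hx
      have h2 := quad_bound_re hbInvPh hs' x hx
      linarith
  obtain ⟨hWu, hWinvPh⟩ := phases_inv hWPh
  rw [neg_neg, neg_neg, hfinal] at hWinvPh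
  exact ⟨hU, hfinal, sectorial_of_phases hWinvPh hαβ, hWinvPh⟩
end
end

section
/- Let Z^a, Z^b ∈ ℂ^{n×n} be sectorial with phases in [α, β], β − α < π, and let Φ, Ψ, Ξ, Ω ∈ ℝ^{n×n}. Define M = [[Φ, Ψ],[Ξ, Ω]] · diag(Z^a, Z^b) · [[Φ*, Ξ*],[Ψ*, Ω*]] and suppose its Schur complement M/₂₂ = M₁₁ − M₁₂ M₂₂† M₂₁ is well-defined (i.e., ℛ(M₂₁) ⊆ ℛ(M₂₂) and 𝒩(M₁₂) ⊇ 𝒩(M₂₂)). Then M/₂₂ is semi-sectorial with all phases in [α, β]; in particular, its numerical range is contained in the closed sector {r e^{jθ} : r ≥ 0, α ≤ θ ≤ β}. -/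
open Matrix Complex

noncomputable section

/-! ### Auxiliary material -/

/-- An auxiliary closed convex cone given by three half-plane conditions. -/
def Kset (α β : ℝ) : Set ℂ :=
  {z | 0 ≤ (Complex.exp (-(α : ℂ) * Complex.I) * z).im ∧
       (Complex.exp (-(β : ℂ) * Complex.I) * z).im ≤ 0 ∧
       0 ≤ (Complex.exp (-(((α + β) / 2 : ℝ) : ℂ) * Complex.I) * z).re}

lemma Kset_zero (α β : ℝ) : (0 : ℂ) ∈ Kset α β := by simp [Kset]

lemma Kset_add {α β : ℝ} {z w : ℂ} (hz : z ∈ Kset α β) (hw : w ∈ Kset α β) :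
    z + w ∈ Kset α β := by
  obtain ⟨h1, h2, h3⟩ := hz
  obtain ⟨g1, g2, g3⟩ := hw
  refine ⟨?_, ?_, ?_⟩ <;> simp only [mul_add, Complex.add_im, Complex.add_re]
  · exact add_nonneg h1 g1
  · exact add_nonpos h2 g2
  · exact add_nonneg h3 g3

lemma Kset_sum {α β : ℝ} {ι : Type*} (s : Finset ι) (f : ι → ℂ)
    (h : ∀ i ∈ s, f i ∈ Kset α β) : (∑ i ∈ s, f i) ∈ Kset α β :=
  Finset.sum_induction f (· ∈ Kset α β) (fun _ _ ha hb => Kset_add ha hb) (Kset_zero α β) h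

lemma mul_exp_im (c x : ℝ) :
    ((c : ℂ) * Complex.exp ((x : ℂ) * Complex.I)).im = c * Real.sin x := by
  simp [Complex.mul_im, Complex.exp_ofReal_mul_I_re, Complex.exp_ofReal_mul_I_im]

lemma mul_exp_re (c x : ℝ) :
    ((c : ℂ) * Complex.exp ((x : ℂ) * Complex.I)).re = c * Real.cos x := by
  simp [Complex.mul_re, Complex.exp_ofReal_mul_I_re, Complex.exp_ofReal_mul_I_im]

lemma exp_mul_aux (a c θ : ℝ) :
    Complex.exp (-(a : ℂ) * Complex.I) * ((c : ℂ) * Complex.exp ((θ : ℂ) * Complex.I)) =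
      (c : ℂ) * Complex.exp (((θ - a : ℝ) : ℂ) * Complex.I) := by
  rw [mul_left_comm, ← Complex.exp_add]
  congr 2
  push_cast
  ring

lemma mem_Kset {α β c θ : ℝ} (hαβ : β - α < Real.pi) (hc : 0 ≤ c)
    (hθ1 : α ≤ θ) (hθ2 : θ ≤ β) :
    (c : ℂ) * Complex.exp ((θ : ℂ) * Complex.I) ∈ Kset α β := by
  have hπ := Real.pi_pos
  refine ⟨?_, ?_, ?_⟩
  · rw [exp_mul_aux, mul_exp_im]
    exact mul_nonneg hc (Real.sin_nonneg_of_nonneg_of_le_pi (by linarith) (by linarith))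
  · rw [exp_mul_aux, mul_exp_im]
    have h : 0 ≤ Real.sin (β - θ) :=
      Real.sin_nonneg_of_nonneg_of_le_pi (by linarith) (by linarith)
    have h' : Real.sin (θ - β) ≤ 0 := by
      rw [show θ - β = -(β - θ) by ring, Real.sin_neg]; linarith
    exact mul_nonpos_of_nonneg_of_nonpos hc h'
  · rw [exp_mul_aux, mul_exp_re]
    exact mul_nonneg hc
      (Real.cos_nonneg_of_neg_pi_div_two_le_of_le (by linarith) (by linarith))

lemma quad_conj {ι : Type*} [Fintype ι] (T D : Matrix ι ι ℂ) (v : ι → ℂ) :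
    star v ⬝ᵥ (Tᴴ * D * T) *ᵥ v = star (T *ᵥ v) ⬝ᵥ D *ᵥ (T *ᵥ v) := by
  rw [mul_assoc, ← Matrix.mulVec_mulVec, Matrix.dotProduct_mulVec, ← Matrix.star_mulVec,
    Matrix.mulVec_mulVec]

lemma phases_quad_s19 {ι : Type*} [Fintype ι] [DecidableEq ι] {C : Matrix ι ι ℂ} {α β : ℝ}
    (hαβ : β - α < Real.pi) (h : PhasesIn C α β) (v : ι → ℂ) :
    star v ⬝ᵥ C *ᵥ v ∈ Kset α β := by
  obtain ⟨T, D, -, hD, hC, hθ⟩ := h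
  rw [hC, quad_conj]
  set u := T *ᵥ v with hu
  have hmv : ∀ i, (D *ᵥ u) i = D i i * u i := by
    intro i
    simp only [Matrix.mulVec, dotProduct]
    exact Finset.sum_eq_single i (fun j _ hj => by rw [hD (Ne.symm hj), zero_mul])
      (fun hi => absurd (Finset.mem_univ i) hi)
  have hdp : star u ⬝ᵥ D *ᵥ u = ∑ i, ((Complex.normSq (u i) : ℝ) : ℂ) * D i i := by
    simp only [dotProduct, Pi.star_apply]
    refine Finset.sum_congr rfl fun i _ => ?_
    rw [hmv i, Complex.normSq_eq_conj_mul_self]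
    simp [Complex.star_def]
    ring
  rw [hdp]
  refine Kset_sum _ _ fun i _ => ?_
  obtain ⟨θ, hθ1, hθ2, hDii⟩ := hθ i
  rw [hDii]
  exact mem_Kset hαβ (Complex.normSq_nonneg _) hθ1 hθ2

lemma Kset_subset_sector {α β : ℝ} (hle : α ≤ β) (hαβ : β - α < Real.pi) :
    Kset α β ⊆ sector α β := by
  intro z hz
  have hπ := Real.pi_pos
  by_cases h0 : z = 0
  · exact ⟨0, α, le_refl 0, le_refl α, hle, by simp [h0]⟩
  obtain ⟨h1, h2, h3⟩ := hz
  set γ : ℝ := (α + β) / 2 with hγ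
  set w : ℂ := Complex.exp (-(γ : ℂ) * Complex.I) * z with hw
  have hw0 : w ≠ 0 := mul_ne_zero (Complex.exp_ne_zero _) h0
  set φ : ℝ := Complex.arg w with hφ
  have habs : ‖w‖ = ‖z‖ := by
    rw [hw, norm_mul]
    rw [show -(γ : ℂ) * Complex.I = ((-γ : ℝ) : ℂ) * Complex.I by push_cast; ring]
    rw [Complex.norm_exp_ofReal_mul_I, one_mul]
  have hφ2 : |φ| ≤ Real.pi / 2 := Complex.abs_arg_le_pi_div_two_iff.mpr h3
  have hzrep : z = (‖z‖ : ℂ) * Complex.exp (((γ + φ : ℝ) : ℂ) * Complex.I) := by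
    have hwz : Complex.exp ((γ : ℂ) * Complex.I) * w = z := by
      rw [hw, ← mul_assoc, ← Complex.exp_add]
      rw [show (γ : ℂ) * Complex.I + -(γ : ℂ) * Complex.I = 0 by ring, Complex.exp_zero, one_mul]
    calc z = Complex.exp ((γ : ℂ) * Complex.I) * w := hwz.symm
      _ = Complex.exp ((γ : ℂ) * Complex.I) *
          ((‖w‖ : ℂ) * Complex.exp ((φ : ℂ) * Complex.I)) := by
            rw [hφ, Complex.norm_mul_exp_arg_mul_I]
      _ = (‖z‖ : ℂ) * Complex.exp (((γ + φ : ℝ) : ℂ) * Complex.I) := by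
            rw [habs, mul_left_comm, ← Complex.exp_add]
            congr 2
            push_cast
            ring
  have hρ : 0 < ‖z‖ := by
    simpa [norm_pos_iff] using h0
  have e1 : 0 ≤ ‖z‖ * Real.sin (γ + φ - α) := by
    have h1' := h1
    rw [hzrep, exp_mul_aux, mul_exp_im] at h1'
    exact h1'
  have e2 : ‖z‖ * Real.sin (γ + φ - β) ≤ 0 := by
    have h2' := h2
    rw [hzrep, exp_mul_aux, mul_exp_im] at h2'
    exact h2'
  have hs1 : 0 ≤ Real.sin (γ + φ - α) := by
    by_contra hc
    push_neg at hc
    nlinarith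
  have hs2 : Real.sin (γ + φ - β) ≤ 0 := by
    by_contra hc
    push_neg at hc
    nlinarith
  have hφl : -(Real.pi / 2) ≤ φ := (abs_le.mp hφ2).1
  have hφr : φ ≤ Real.pi / 2 := (abs_le.mp hφ2).2
  have hb1 : α ≤ γ + φ := by
    by_contra hc
    push_neg at hc
    have : Real.sin (γ + φ - α) < 0 :=
      Real.sin_neg_of_neg_of_neg_pi_lt (by linarith)
        (by rw [hγ] at hc ⊢; linarith)
    linarith
  have hb2 : γ + φ ≤ β := by
    by_contra hc
    push_neg at hc
    have : 0 < Real.sin (γ + φ - β) :=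
      Real.sin_pos_of_pos_of_lt_pi (by linarith) (by rw [hγ] at hc ⊢; linarith)
    linarith
  exact ⟨‖z‖, γ + φ, norm_nonneg z, hb1, hb2, hzrep⟩

theorem general_connection_preserves_phases {n : ℕ}
    (Za Zb : Matrix (Fin n) (Fin n) ℂ) (α β : ℝ)
    (hαβ : β - α < Real.pi) (ha : MemZ Za α β) (hb : MemZ Zb α β)
    (Φ Ψ Ξ Ω : Matrix (Fin n) (Fin n) ℝ)
    (F : Matrix ((Fin n) ⊕ (Fin n)) ((Fin n) ⊕ (Fin n)) ℂ)
    (hF : F = (Matrix.fromBlocks Φ Ψ Ξ Ω).map (Complex.ofReal))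
    (M : Matrix ((Fin n) ⊕ (Fin n)) ((Fin n) ⊕ (Fin n)) ℂ)
    (hM : M = F * Matrix.fromBlocks Za 0 0 Zb * Fᴴ)
    -- well-definedness of the generalized Schur complement:
    (hrange : LinearMap.range (M.toBlocks₂₁).mulVecLin ≤
      LinearMap.range (M.toBlocks₂₂).mulVecLin)
    (hker : LinearMap.ker (M.toBlocks₂₂).mulVecLin ≤
      LinearMap.ker (M.toBlocks₁₂).mulVecLin)
    -- `G` is any generalized inverse of `M₂₂` (in particular the Moore–Penrose inverse):
    (G : Matrix (Fin n) (Fin n) ℂ)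
    (hG : M.toBlocks₂₂ * G * M.toBlocks₂₂ = M.toBlocks₂₂) :
    (0 : ℂ) ∉ interior (numRange (M.toBlocks₁₁ - M.toBlocks₁₂ * G * M.toBlocks₂₁)) ∧
      numRange (M.toBlocks₁₁ - M.toBlocks₁₂ * G * M.toBlocks₂₁) ⊆ sector α β := by
  classical
  set S : Matrix (Fin n) (Fin n) ℂ := M.toBlocks₁₁ - M.toBlocks₁₂ * G * M.toBlocks₂₁ with hS
  have hsub : numRange S ⊆ Kset α β := by
    rintro z ⟨x, hx1, hx2⟩
    have hkey : M.toBlocks₂₂ *ᵥ (G *ᵥ (M.toBlocks₂₁ *ᵥ x)) = M.toBlocks₂₁ *ᵥ x := by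
      obtain ⟨u, hu⟩ := hrange (LinearMap.mem_range_self _ x)
      have hu' : M.toBlocks₂₂ *ᵥ u = M.toBlocks₂₁ *ᵥ x := hu
      calc M.toBlocks₂₂ *ᵥ (G *ᵥ (M.toBlocks₂₁ *ᵥ x))
          = M.toBlocks₂₂ *ᵥ (G *ᵥ (M.toBlocks₂₂ *ᵥ u)) := by rw [hu']
        _ = (M.toBlocks₂₂ * G * M.toBlocks₂₂) *ᵥ u := by
              rw [Matrix.mulVec_mulVec, Matrix.mulVec_mulVec]
        _ = M.toBlocks₂₂ *ᵥ u := by rw [hG]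
        _ = M.toBlocks₂₁ *ᵥ x := hu'
    set y : Fin n → ℂ := -(G *ᵥ (M.toBlocks₂₁ *ᵥ x)) with hy
    set zz : (Fin n ⊕ Fin n) → ℂ := Sum.elim x y with hzz
    have hstar : star zz = Sum.elim (star x) (star y) := by
      funext i; cases i <;> rfl
    have hA : star zz ⬝ᵥ M *ᵥ zz = z := by
      conv_lhs => rw [← Matrix.fromBlocks_toBlocks M]
      rw [hzz, Matrix.fromBlocks_mulVec, hstar, sumElim_dotProduct_sumElim]
      simp only [Sum.elim_comp_inl, Sum.elim_comp_inr]
      have h2 : M.toBlocks₂₂ *ᵥ y = -(M.toBlocks₂₁ *ᵥ x) := by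
        rw [hy, Matrix.mulVec_neg, hkey]
      rw [h2, add_neg_cancel, dotProduct_zero, add_zero, hy, Matrix.mulVec_neg,
        Matrix.mulVec_mulVec, Matrix.mulVec_mulVec, ← hx2, hS]
      rw [Matrix.sub_mulVec, sub_eq_add_neg]
    have hB : star zz ⬝ᵥ M *ᵥ zz =
        star ((Fᴴ *ᵥ zz) ∘ Sum.inl) ⬝ᵥ Za *ᵥ ((Fᴴ *ᵥ zz) ∘ Sum.inl) +
        star ((Fᴴ *ᵥ zz) ∘ Sum.inr) ⬝ᵥ Zb *ᵥ ((Fᴴ *ᵥ zz) ∘ Sum.inr) := by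
      have hMd : M = Fᴴᴴ * Matrix.fromBlocks Za 0 0 Zb * Fᴴ := by
        rw [Matrix.conjTranspose_conjTranspose]; exact hM
      rw [hMd, quad_conj]
      set w : (Fin n ⊕ Fin n) → ℂ := Fᴴ *ᵥ zz with hw
      have hwe : w = Sum.elim (w ∘ Sum.inl) (w ∘ Sum.inr) := by
        funext i; cases i <;> rfl
      have hstarw : star (Sum.elim (w ∘ Sum.inl) (w ∘ Sum.inr)) =
          Sum.elim (star (w ∘ Sum.inl)) (star (w ∘ Sum.inr)) := by
        funext i; cases i <;> rfl
      conv_lhs => rw [hwe]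
      rw [Matrix.fromBlocks_mulVec, hstarw, sumElim_dotProduct_sumElim]
      simp only [Sum.elim_comp_inl, Sum.elim_comp_inr]
      simp
    have hz' : z = star ((Fᴴ *ᵥ zz) ∘ Sum.inl) ⬝ᵥ Za *ᵥ ((Fᴴ *ᵥ zz) ∘ Sum.inl) +
        star ((Fᴴ *ᵥ zz) ∘ Sum.inr) ⬝ᵥ Zb *ᵥ ((Fᴴ *ᵥ zz) ∘ Sum.inr) := by
      rw [← hA, hB]
    rw [hz']
    exact Kset_add (phases_quad_s19 hαβ ha.2 _) (phases_quad_s19 hαβ hb.2 _)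
  constructor
  · intro h0
    have hnh : numRange S ∈ nhds (0 : ℂ) := mem_interior_iff_mem_nhds.mp h0
    obtain ⟨ε, hε, hball⟩ := Metric.mem_nhds_iff.mp hnh
    have hz0 : ((-(ε / 2) : ℝ) : ℂ) * Complex.exp ((((α + β) / 2 : ℝ) : ℂ) * Complex.I) ∈
        numRange S := by
      apply hball
      rw [Metric.mem_ball, dist_zero_right]
      rw [norm_mul]
      rw [Complex.norm_real, Complex.norm_exp_ofReal_mul_I]
      rw [mul_one, Real.norm_eq_abs, abs_neg, abs_of_pos (by linarith)]
      linarith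
    have h3 := (hsub hz0).2.2
    rw [exp_mul_aux] at h3
    rw [show ((α + β) / 2 - (α + β) / 2 : ℝ) = 0 by ring] at h3
    rw [mul_exp_re, Real.cos_zero, mul_one] at h3
    linarith
  · intro z hz
    have hK := hsub hz
    obtain ⟨x, hx1, -⟩ := hz
    have hn : Nonempty (Fin n) := by
      by_contra h
      rw [not_nonempty_iff] at h
      simp [dotProduct] at hx1
    obtain ⟨T, D, -, -, -, hθ⟩ := ha.2
    obtain ⟨θ0, hθ1, hθ2, -⟩ := hθ (Classical.arbitrary _)
    exact Kset_subset_sector (le_trans hθ1 hθ2) hαβ hK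

end
end
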